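/- Let 0 < λ < 1 and let E_λ be the conditional expectation on the C*-algebra M₂(ℂ) of complex 2×2 matrices defined by E_λ(a) = (λ·a₁₁ + (1 − λ)·a₂₂)·1₂. Then for a real number L ≥ 1, the map L·E_λ − id is completely positive (i.e. for every n ≥ 1 its entrywise application to n×n matrices over M₂(ℂ) maps positive elements to positive elements) if and only if L ≥ λ⁻¹ + (1 − λ)⁻¹. -/

import Mathlib

open scoped ComplexOrder

/-- The conditional expectation `E_λ` on the C*-algebra of 2×2 complex matrices,
`E_λ(a) = (λ·a₁₁ + (1 − λ)·a₂₂)·1₂`. -/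
noncomputable def Elam (l : ℝ) (a : Matrix (Fin 2) (Fin 2) ℂ) : Matrix (Fin 2) (Fin 2) ℂ :=
  ((l : ℂ) * a 0 0 + (1 - (l : ℂ)) * a 1 1) • (1 : Matrix (Fin 2) (Fin 2) ℂ)

/-- A map `Φ` on a (C*-)algebra `R` is completely positive if for every `n ≥ 1` its entrywise
application to `n × n` matrices over `R` maps positive elements (i.e. elements of the form
`star B * B`, which are exactly the positive elements of the C*-algebra of matrices over a
C*-algebra) to positive elements. -/
def IsCompletelyPositive {R : Type*} [Ring R] [StarRing R] (Φ : R → R) : Prop :=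
  ∀ (n : ℕ) (M : Matrix (Fin n) (Fin n) R),
    (∃ B : Matrix (Fin n) (Fin n) R, M = star B * B) →
    ∃ C : Matrix (Fin n) (Fin n) R, M.map Φ = star C * C

section Aux

/-- `Matrix.compRingEquiv` commutes with `star`. -/
lemma comp_star' {n : ℕ} (M : Matrix (Fin n) (Fin n) (Matrix (Fin 2) (Fin 2) ℂ)) :
    Matrix.compRingEquiv (Fin n) (Fin 2) ℂ (star M)
      = star (Matrix.compRingEquiv (Fin n) (Fin 2) ℂ M) := by
  ext ⟨i, p⟩ ⟨j, q⟩
  simp [Matrix.compRingEquiv, Matrix.compAddEquiv, Matrix.comp, Matrix.star_apply]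
  rfl

lemma hconj' {n : ℕ} (B : Matrix (Fin n) (Fin n) (Matrix (Fin 2) (Fin 2) ℂ))
    (V : Matrix (Fin 2) (Fin 2) ℂ) (i j : Fin n) :
    (star (B * Matrix.diagonal (fun _ : Fin n => V))
        * (B * Matrix.diagonal (fun _ : Fin n => V))) i j
      = star V * ((star B * B) i j) * V := by
  have h1 : ∀ k, (star (B * Matrix.diagonal (fun _ : Fin n => V))) i k
      * (B * Matrix.diagonal (fun _ : Fin n => V)) k j
      = star V * ((star B) i k * B k j) * V := by
    intro k
    simp only [Matrix.star_apply, Matrix.mul_diagonal, star_mul]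
    noncomm_ring
  rw [Matrix.mul_apply, Matrix.mul_apply, Finset.mul_sum, Finset.sum_mul]
  exact Finset.sum_congr rfl fun k _ => h1 k

lemma kraus' (l L : ℝ) (β γ δ ε : ℂ) (hβ0 : β ≠ 0)
    (hcβ : (starRingEnd ℂ) β = β) (hcγ : (starRingEnd ℂ) γ = γ)
    (hcδ : (starRingEnd ℂ) δ = δ) (hcε : (starRingEnd ℂ) ε = ε)
    (hβ : β * β = (L : ℂ) * (1 - l) - 1)
    (hβγ : (β * β) * (γ * γ) = ((L : ℂ) * l - 1) * (β * β) - 1)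
    (hδ : δ * δ = (L : ℂ) * l)
    (hε : ε * ε = (L : ℂ) * (1 - l))
    (x : Matrix (Fin 2) (Fin 2) ℂ) :
    L • Elam l x - x =
      star !![-β⁻¹, 0; 0, β] * x * !![-β⁻¹, 0; 0, β] +
      star !![γ, 0; 0, 0] * x * !![γ, 0; 0, 0] +
      star !![0, δ; 0, 0] * x * !![0, δ; 0, 0] +
      star !![0, 0; ε, 0] * x * !![0, 0; ε, 0] := by
  ext p q
  fin_cases p <;> fin_cases q
  · simp only [Elam, Matrix.mul_apply, Fin.sum_univ_two, Matrix.star_eq_conjTranspose,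
      Matrix.conjTranspose_apply, Matrix.one_apply, Matrix.smul_apply, Matrix.sub_apply,
      Matrix.cons_val', Matrix.cons_val_zero, Matrix.cons_val_one, Matrix.head_cons,
      Matrix.head_fin_const, Matrix.empty_val', Matrix.cons_val_fin_one, Matrix.add_apply,
      Fin.zero_eta, Fin.mk_one, if_true, Complex.real_smul, Complex.star_def, map_inv₀, map_neg, map_zero, hcβ, hcγ, hcδ, hcε, Matrix.smul_apply, smul_eq_mul, Matrix.of_apply]
    try field_simp
    try simp only [hcβ, hcγ, hcδ, hcε, map_inv₀]
    try field_simp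
    linear_combination (-(x 0 0)) * hβγ - (x 1 1) * (β * β) * hε
  · simp [Elam, Matrix.mul_apply, Fin.sum_univ_two, Matrix.star_eq_conjTranspose,
      Matrix.conjTranspose_apply, Matrix.one_apply, Matrix.smul_apply, Matrix.sub_apply,
      Matrix.cons_val', Matrix.cons_val_zero, Matrix.cons_val_one, Matrix.head_cons,
      Matrix.head_fin_const, Matrix.empty_val', Matrix.cons_val_fin_one, Matrix.add_apply,
      Fin.zero_eta, Fin.mk_one, if_true, Complex.real_smul, Complex.star_def, map_inv₀,
      map_neg, map_zero, hcβ, hcγ, hcδ, hcε, Matrix.smul_apply, smul_eq_mul]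
    field_simp
  · simp [Elam, Matrix.mul_apply, Fin.sum_univ_two, Matrix.star_eq_conjTranspose,
      Matrix.conjTranspose_apply, Matrix.one_apply, Matrix.smul_apply, Matrix.sub_apply,
      Matrix.cons_val', Matrix.cons_val_zero, Matrix.cons_val_one, Matrix.head_cons,
      Matrix.head_fin_const, Matrix.empty_val', Matrix.cons_val_fin_one, Matrix.add_apply,
      Fin.zero_eta, Fin.mk_one, if_true, Complex.real_smul, Complex.star_def, map_inv₀,
      map_neg, map_zero, hcβ, hcγ, hcδ, hcε, Matrix.smul_apply, smul_eq_mul]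
    field_simp
  · simp [Elam, Matrix.mul_apply, Fin.sum_univ_two, Matrix.star_eq_conjTranspose,
      Matrix.conjTranspose_apply, Matrix.one_apply, Matrix.smul_apply, Matrix.sub_apply,
      Matrix.cons_val', Matrix.cons_val_zero, Matrix.cons_val_one, Matrix.head_cons,
      Matrix.head_fin_const, Matrix.empty_val', Matrix.cons_val_fin_one, Matrix.add_apply,
      Fin.zero_eta, Fin.mk_one, if_true, Complex.real_smul, Complex.star_def, map_inv₀,
      map_neg, map_zero, hcβ, hcγ, hcδ, hcε, Matrix.smul_apply, smul_eq_mul]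
    try field_simp
    try simp only [hcβ, hcγ, hcδ, hcε, map_inv₀]
    try field_simp
    linear_combination (-(x 0 0)) * hδ - (x 1 1) * hβ


end Aux

theorem Elam_completely_positive_iff (l : ℝ) (h0 : 0 < l) (h1 : l < 1) (L : ℝ) (hL : 1 ≤ L) :
    IsCompletelyPositive (fun a : Matrix (Fin 2) (Fin 2) ℂ => L • Elam l a - a) ↔
      l⁻¹ + (1 - l)⁻¹ ≤ L := by
  constructor
  · intro h
    classical
    set B₀ : Matrix (Fin 2) (Fin 2) (Matrix (Fin 2) (Fin 2) ℂ) :=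
      Matrix.of fun i j => if i = 0 then Matrix.single 0 j 1 else 0 with hB₀
    obtain ⟨C, hC⟩ := h 2 (star B₀ * B₀) ⟨B₀, rfl⟩
    have h00 : ((star B₀ * B₀).map (fun a => L • Elam l a - a)) 0 0 0 0 = ((L * l - 1 : ℝ) : ℂ) := by
      simp [hB₀, Elam, Matrix.map_apply, Matrix.mul_apply, Matrix.sum_apply, Fin.sum_univ_two,
        Matrix.star_apply, Matrix.single, Matrix.smul_apply, Matrix.sub_apply,
        Matrix.one_apply, Complex.real_smul]
    have h01 : ((star B₀ * B₀).map (fun a => L • Elam l a - a)) 0 1 0 1 = -1 := by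
      simp [hB₀, Elam, Matrix.map_apply, Matrix.mul_apply, Matrix.sum_apply, Fin.sum_univ_two,
        Matrix.star_apply, Matrix.single, Matrix.smul_apply, Matrix.sub_apply,
        Matrix.one_apply, Complex.real_smul]
    have h10 : ((star B₀ * B₀).map (fun a => L • Elam l a - a)) 1 0 1 0 = -1 := by
      simp [hB₀, Elam, Matrix.map_apply, Matrix.mul_apply, Matrix.sum_apply, Fin.sum_univ_two,
        Matrix.star_apply, Matrix.single, Matrix.smul_apply, Matrix.sub_apply,
        Matrix.one_apply, Complex.real_smul]
    have h11 : ((star B₀ * B₀).map (fun a => L • Elam l a - a)) 1 1 1 1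
        = ((L * (1 - l) - 1 : ℝ) : ℂ) := by
      simp [hB₀, Elam, Matrix.map_apply, Matrix.mul_apply, Matrix.sum_apply, Fin.sum_univ_two,
        Matrix.star_apply, Matrix.single, Matrix.smul_apply, Matrix.sub_apply,
        Matrix.one_apply, Complex.real_smul]
    have key : ∀ t : ℝ, 0 ≤ (L * l - 1) * t ^ 2 - 2 * t + (L * (1 - l) - 1) := by
      intro t
      have hS : (((L * l - 1) * t ^ 2 - 2 * t + (L * (1 - l) - 1) : ℝ) : ℂ)
          = ∑ k : Fin 2, ∑ m : Fin 2,
              ((Complex.normSq ((t : ℂ) * C k 0 m 0 + C k 1 m 1) : ℝ) : ℂ) := by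
        have step1 : (((L * l - 1) * t ^ 2 - 2 * t + (L * (1 - l) - 1) : ℝ) : ℂ)
            = (t : ℂ) ^ 2 * ((star C * C) 0 0 0 0) + (t : ℂ) * ((star C * C) 0 1 0 1)
              + (t : ℂ) * ((star C * C) 1 0 1 0) + ((star C * C) 1 1 1 1) := by
          rw [← hC, h00, h01, h10, h11]
          push_cast
          ring
        rw [step1]
        simp only [Matrix.mul_apply, Matrix.sum_apply, Fin.sum_univ_two, Matrix.star_apply,
          Complex.star_def, Complex.normSq_eq_conj_mul_self, map_add, map_mul,
          Complex.conj_ofReal]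
        ring
      have hpos : (0 : ℂ) ≤ ∑ k : Fin 2, ∑ m : Fin 2,
          ((Complex.normSq ((t : ℂ) * C k 0 m 0 + C k 1 m 1) : ℝ) : ℂ) :=
        Finset.sum_nonneg fun k _ => Finset.sum_nonneg fun m _ =>
          Complex.zero_le_real.mpr (Complex.normSq_nonneg _)
      rw [← hS] at hpos
      exact Complex.zero_le_real.mp hpos
    have h1l : (0 : ℝ) < 1 - l := by linarith
    have hb : 0 ≤ L * (1 - l) - 1 := by have := key 0; linarith
    have ha : 0 < L * l - 1 := by
      by_contra hna
      push_neg at hna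
      nlinarith [key ((L * (1 - l) - 1) / 2 + 1), sq_nonneg ((L * (1 - l) - 1) / 2 + 1)]
    have hab : 1 ≤ (L * l - 1) * (L * (1 - l) - 1) := by
      have hk := key ((L * l - 1)⁻¹)
      have h2 : 0 ≤ (L * l - 1) * ((L * l - 1) * ((L * l - 1)⁻¹) ^ 2 - 2 * (L * l - 1)⁻¹
          + (L * (1 - l) - 1)) := mul_nonneg ha.le hk
      have h3 : (L * l - 1) * ((L * l - 1) * ((L * l - 1)⁻¹) ^ 2 - 2 * (L * l - 1)⁻¹
          + (L * (1 - l) - 1)) = (L * l - 1) * (L * (1 - l) - 1) - 1 := by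
        field_simp
        ring
      linarith [h3 ▸ h2]
    rw [inv_eq_one_div, inv_eq_one_div, div_add_div _ _ (ne_of_gt h0) (ne_of_gt h1l),
      div_le_iff₀ (by positivity)]
    nlinarith [hab, hL]
  · intro hLge n M hM
    obtain ⟨B, rfl⟩ := hM
    have h1l : (0:ℝ) < 1 - l := by linarith
    have hK : 1 ≤ L * (l * (1 - l)) := by
      rw [inv_eq_one_div, inv_eq_one_div, div_add_div _ _ (ne_of_gt h0) (ne_of_gt h1l),
        div_le_iff₀ (by positivity)] at hLge
      nlinarith [hLge]
    have hLpos : (0:ℝ) < L := lt_of_lt_of_le one_pos hL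
    have hb : 0 < L * (1 - l) - 1 := by nlinarith
    have ha : 0 < L * l - 1 := by nlinarith
    have hab : 1 ≤ (L * l - 1) * (L * (1 - l) - 1) := by nlinarith
    have hc : (0:ℝ) ≤ (L * l - 1) - (L * (1 - l) - 1)⁻¹ := by
      rw [sub_nonneg, inv_eq_one_div, div_le_iff₀ hb]; nlinarith
    set β : ℂ := ((Real.sqrt (L * (1 - l) - 1) : ℝ) : ℂ) with hβdef
    set γ : ℂ := ((Real.sqrt ((L * l - 1) - (L * (1 - l) - 1)⁻¹) : ℝ) : ℂ) with hγdef
    set δ : ℂ := ((Real.sqrt (L * l) : ℝ) : ℂ) with hδdef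
    set ε : ℂ := ((Real.sqrt (L * (1 - l)) : ℝ) : ℂ) with hεdef
    have hβ0 : β ≠ 0 := by
      simp only [hβdef, ne_eq, Complex.ofReal_eq_zero]
      exact (Real.sqrt_pos.mpr hb).ne'
    have hβ : β * β = (L : ℂ) * (1 - l) - 1 := by
      rw [hβdef, ← Complex.ofReal_mul, Real.mul_self_sqrt hb.le]; push_cast; ring
    have hγ : γ * γ = (((L * l - 1) - (L * (1 - l) - 1)⁻¹ : ℝ) : ℂ) := by
      rw [hγdef, ← Complex.ofReal_mul, Real.mul_self_sqrt hc]
    have hβγ : (β * β) * (γ * γ) = ((L : ℂ) * l - 1) * (β * β) - 1 := by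
      rw [hγ, hβ]
      have : (L * (1 - l) - 1) * ((L * l - 1) - (L * (1 - l) - 1)⁻¹)
          = (L * l - 1) * (L * (1 - l) - 1) - 1 := by field_simp
      have h2 : ((L:ℂ) * (1 - l) - 1) = (((L * (1 - l) - 1 : ℝ)) : ℂ) := by push_cast; ring
      rw [h2, ← Complex.ofReal_mul, this]
      push_cast; ring
    have hδ : δ * δ = (L : ℂ) * l := by
      rw [hδdef, ← Complex.ofReal_mul, Real.mul_self_sqrt (by nlinarith : (0:ℝ) ≤ L * l)]; push_cast; ring
    have hε : ε * ε = (L : ℂ) * (1 - l) := by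
      rw [hεdef, ← Complex.ofReal_mul, Real.mul_self_sqrt (by nlinarith : (0:ℝ) ≤ L * (1 - l))]
      push_cast; ring
    have hKr := kraus' l L β γ δ ε hβ0 (Complex.conj_ofReal _) (Complex.conj_ofReal _)
      (Complex.conj_ofReal _) (Complex.conj_ofReal _) hβ hβγ hδ hε
    set V1 : Matrix (Fin 2) (Fin 2) ℂ := !![-β⁻¹, 0; 0, β]
    set V2 : Matrix (Fin 2) (Fin 2) ℂ := !![γ, 0; 0, 0]
    set V3 : Matrix (Fin 2) (Fin 2) ℂ := !![0, δ; 0, 0]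
    set V4 : Matrix (Fin 2) (Fin 2) ℂ := !![0, 0; ε, 0]
    set D1 := B * Matrix.diagonal (fun _ : Fin n => V1)
    set D2 := B * Matrix.diagonal (fun _ : Fin n => V2)
    set D3 := B * Matrix.diagonal (fun _ : Fin n => V3)
    set D4 := B * Matrix.diagonal (fun _ : Fin n => V4)
    have hmap : (star B * B).map (fun a => L • Elam l a - a)
        = star D1 * D1 + star D2 * D2 + star D3 * D3 + star D4 * D4 := by
      apply Matrix.ext
      intro i j
      simp only [Matrix.map_apply, Matrix.add_apply, D1, D2, D3, D4, hconj']
      exact hKr ((star B * B) i j)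
    have hP : ((Matrix.compRingEquiv (Fin n) (Fin 2) ℂ) ((star B * B).map (fun a => L • Elam l a - a))).PosSemidef := by
      rw [hmap]
      simp only [map_add, map_mul, comp_star']
      simp only [Matrix.star_eq_conjTranspose]
      exact (((Matrix.posSemidef_conjTranspose_mul_self _).add
        (Matrix.posSemidef_conjTranspose_mul_self _)).add
        (Matrix.posSemidef_conjTranspose_mul_self _)).add
        (Matrix.posSemidef_conjTranspose_mul_self _)
    obtain ⟨A, hA⟩ : ∃ A : Matrix (Fin n × Fin 2) (Fin n × Fin 2) ℂ, _ = A.conjTranspose * A := by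
      open scoped MatrixOrder in exact CStarAlgebra.nonneg_iff_eq_star_mul_self.mp hP.nonneg
    refine ⟨(Matrix.compRingEquiv (Fin n) (Fin 2) ℂ).symm A, (Matrix.compRingEquiv (Fin n) (Fin 2) ℂ).injective ?_⟩
    rw [map_mul, comp_star', RingEquiv.apply_symm_apply, hA, Matrix.star_eq_conjTranspose]
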